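/- (Proposition 3). Let g be a kernel of ℓ dimensions whose partial distance sequence D_g(0) ≤ ⋯ ≤ D_g(ℓ−1) is non-decreasing. Then the sequence (D_g(i))_{i=0}^{ℓ−1} is ℓ-dimensions LP-valid; that is: (a) D_g(i) ≤ d(ℓ, ℓ−i) for every i, and (b) there exist nonnegative real numbers B̄_i^{(k)}, for k ∈ {0,…,ℓ−1} and D_g(k) ≤ i ≤ ℓ, satisfying: (1) Σ_{i=D_g(ℓ−r)}^{ℓ} B̄_i^{(ℓ−r)} = 2^r − 1 for every r ∈ {1,…,ℓ}; (2) B̄_i^{(ℓ−r)} ≥ B̄_i^{(ℓ−r+1)} for every r ∈ {1,…,ℓ−1} and every i with D_g(ℓ−r+1) ≤ i ≤ ℓ; (3) Σ_{j=D_g(ℓ−r)}^{ℓ} B̄_j^{(ℓ−r)}·P_i(j) ≥ −C(ℓ,i) for every i ∈ {0,…,ℓ} and every r ∈ {1,…,ℓ}. -/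

import Mathlib

/-- The `i`-th partial distance of a kernel `g` of `ℓ` dimensions:
`D_g(i) = min { d_H(g(w•0•u), g(w•1•v)) : w ∈ {0,1}^i, u, v ∈ {0,1}^{ℓ−1−i} }`,
phrased via pairs of inputs that agree on coordinates `< i` and differ as `0`/`1`
at coordinate `i`. -/
noncomputable def partialDist {ℓ : ℕ} (g : (Fin ℓ → ZMod 2) → (Fin ℓ → ZMod 2)) (i : ℕ) : ℕ :=
  sInf { d | ∃ x y : Fin ℓ → ZMod 2,
    (∀ j : Fin ℓ, (j : ℕ) < i → x j = y j) ∧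
    (∀ j : Fin ℓ, (j : ℕ) = i → x j = 0 ∧ y j = 1) ∧
    d = hammingDist (g x) (g y) }

/-- `d(n,k)`: the largest `d` such that there is a binary code of length `n` and size `2^k`
all of whose pairs of distinct codewords are at Hamming distance at least `d`. -/
noncomputable def maxMinDist (n k : ℕ) : ℕ :=
  sSup { d | ∃ C : Finset (Fin n → ZMod 2), C.card = 2 ^ k ∧
    ∀ c0 ∈ C, ∀ c1 ∈ C, c0 ≠ c1 → d ≤ hammingDist c0 c1 }

/-- The binary Krawtchouk polynomial of degree `i` for length `ℓ`, evaluated at `x`. -/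
def kraw (ℓ i x : ℕ) : ℤ :=
  ∑ m ∈ Finset.range (i + 1),
    (-1) ^ m * (Nat.choose x m : ℤ) * (Nat.choose (ℓ - x) (i - m) : ℤ)

open Finset

section Aux

lemma zmod2_cases (a : ZMod 2) : a = 0 ∨ a = 1 := by revert a; decide

noncomputable def χ (a : ZMod 2) : ℝ := if a = 0 then 1 else -1

lemma χ_zero : χ 0 = 1 := by simp [χ]

lemma χ_add (a b : ZMod 2) : χ (a + b) = χ a * χ b := by
  have h11 : (1 : ZMod 2) + 1 = 0 := by decide
  rcases zmod2_cases a with ha|ha <;> rcases zmod2_cases b with hb|hb <;>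
    subst ha <;> subst hb <;> simp [χ, h11]

lemma χ_sum {α : Type*} (s : Finset α) (f : α → ZMod 2) :
    χ (∑ j ∈ s, f j) = ∏ j ∈ s, χ (f j) := by
  induction s using Finset.cons_induction with
  | empty => simp [χ_zero]
  | cons a s ha ih => rw [Finset.sum_cons, Finset.prod_cons, χ_add, ih]

lemma sum_pairs_sq {α κ : Type*} [Fintype α] [DecidableEq α] [Fintype κ] [DecidableEq κ]
    (key : α → κ) (f : α → ℝ) :
    ∑ p ∈ Finset.univ.filter (fun p : α × α => key p.1 = key p.2), f p.1 * f p.2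
      = ∑ w : κ, (∑ x ∈ Finset.univ.filter (fun x => key x = w), f x) ^ 2 := by
  have hrhs : ∀ w : κ, (∑ x ∈ Finset.univ.filter (fun x => key x = w), f x) ^ 2
      = ∑ x : α, ∑ y : α,
        (if key x = w then f x else 0) * (if key y = w then f y else 0) := by
    intro w
    rw [sq, Finset.sum_filter, Finset.sum_mul_sum]
  calc ∑ p ∈ Finset.univ.filter (fun p : α × α => key p.1 = key p.2), f p.1 * f p.2
      = ∑ p : α × α, (if key p.1 = key p.2 then f p.1 * f p.2 else 0) := by
        rw [Finset.sum_filter]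
    _ = ∑ x : α, ∑ y : α, (if key x = key y then f x * f y else 0) := by
        rw [Fintype.sum_prod_type]
    _ = ∑ x : α, ∑ y : α, ∑ w : κ,
        (if key x = w then f x else 0) * (if key y = w then f y else 0) := by
        refine Finset.sum_congr rfl fun x _ => Finset.sum_congr rfl fun y _ => ?_
        rw [Finset.sum_eq_single (key x)
          (fun w _ hw => by rw [if_neg (fun h => hw h.symm), zero_mul])
          (fun h => absurd (Finset.mem_univ _) h)]
        by_cases h : key x = key y <;> simp [h, eq_comm]
    _ = ∑ x : α, ∑ w : κ, ∑ y : α,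
        (if key x = w then f x else 0) * (if key y = w then f y else 0) :=
        Finset.sum_congr rfl fun x _ => Finset.sum_comm
    _ = ∑ w : κ, ∑ x : α, ∑ y : α,
        (if key x = w then f x else 0) * (if key y = w then f y else 0) :=
        Finset.sum_comm
    _ = ∑ w : κ, (∑ x ∈ Finset.univ.filter (fun x => key x = w), f x) ^ 2 :=
        Finset.sum_congr rfl fun w _ => (hrhs w).symm

lemma kraw_zero (ℓ i : ℕ) : kraw ℓ i 0 = (ℓ.choose i : ℤ) := by
  rw [kraw, Finset.sum_eq_single 0]
  · simp
  · intro m _ hm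
    rw [Nat.choose_eq_zero_of_lt (Nat.pos_of_ne_zero hm)]
    simp
  · intro h; exact absurd (Finset.mem_range.2 (Nat.succ_pos i)) h

lemma chi_dot (ℓ : ℕ) (z u : Fin ℓ → ZMod 2) :
    χ (∑ j, z j * u j)
      = (-1 : ℝ) ^ ((Finset.univ.filter (fun j => z j ≠ 0)) ∩
          (Finset.univ.filter (fun j => u j ≠ 0))).card := by
  rw [χ_sum]
  have h1 : ∀ j : Fin ℓ, χ (z j * u j) = if z j * u j = 0 then (1:ℝ) else -1 := fun j => rfl
  calc ∏ j, χ (z j * u j) = ∏ j, (if z j * u j = 0 then (1:ℝ) else -1) :=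
        Finset.prod_congr rfl fun j _ => h1 j
    _ = (-1 : ℝ) ^ (Finset.univ.filter (fun j => ¬ (z j * u j = 0))).card := by
        rw [Finset.prod_ite, Finset.prod_const, Finset.prod_const, one_pow, one_mul]
    _ = _ := by
        congr 1
        rw [← Finset.filter_and]
        exact congrArg Finset.card (Finset.filter_congr fun j _ => by
          simp [mul_eq_zero, not_or])

lemma sum_wt_support (ℓ i : ℕ) (F : Finset (Fin ℓ) → ℝ) :
    ∑ z ∈ Finset.univ.filter (fun z : Fin ℓ → ZMod 2 => hammingNorm z = i),
        F (Finset.univ.filter (fun j => z j ≠ 0))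
      = ∑ s ∈ Finset.powersetCard i (Finset.univ : Finset (Fin ℓ)), F s := by
  have hnorm : ∀ z : Fin ℓ → ZMod 2,
      hammingNorm z = (Finset.univ.filter (fun j => z j ≠ 0)).card := fun z => rfl
  refine Finset.sum_nbij' (i := fun z => Finset.univ.filter (fun j => z j ≠ 0))
    (j := fun s => fun j => if j ∈ s then (1 : ZMod 2) else 0) ?_ ?_ ?_ ?_ ?_
  · intro z hz
    rw [Finset.mem_powersetCard]
    exact ⟨Finset.filter_subset _ _, ((hnorm z).symm.trans (Finset.mem_filter.1 hz).2)⟩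
  · intro s hs
    rw [Finset.mem_filter]
    refine ⟨Finset.mem_univ _, ?_⟩
    rw [hnorm, ← (Finset.mem_powersetCard.1 hs).2]
    congr 1
    ext j
    by_cases h : j ∈ s <;> simp [h]
  · intro z hz
    funext j
    rcases zmod2_cases (z j) with h|h <;> simp [h]
  · intro s hs
    ext j
    by_cases h : j ∈ s <;> simp [h]
  · intro z hz; rfl

lemma sum_powersetCard_inter (ℓ i : ℕ) (T : Finset (Fin ℓ)) :
    ∑ s ∈ Finset.powersetCard i (Finset.univ : Finset (Fin ℓ)),
        ((-1:ℝ)) ^ (s ∩ T).card = (kraw ℓ i T.card : ℝ) := by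
  set w := T.card with hw
  have hwl : w ≤ ℓ := by
    simpa using Finset.card_le_card (Finset.subset_univ T)
  have stepA : ∑ s ∈ Finset.powersetCard i (Finset.univ : Finset (Fin ℓ)),
      ((-1:ℝ)) ^ (s ∩ T).card
      = ∑ q ∈ (T.powerset ×ˢ Tᶜ.powerset).filter (fun q => q.1.card + q.2.card = i),
          ((-1:ℝ)) ^ q.1.card := by
    refine Finset.sum_nbij' (i := fun s => (s ∩ T, s \ T)) (j := fun q => q.1 ∪ q.2)
      ?_ ?_ ?_ ?_ ?_
    · intro s hs
      rw [Finset.mem_filter, Finset.mem_product]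
      refine ⟨⟨Finset.mem_powerset.2 Finset.inter_subset_right, Finset.mem_powerset.2 ?_⟩, ?_⟩
      · intro j hj
        exact Finset.mem_compl.2 (Finset.mem_sdiff.1 hj).2
      · rw [Finset.card_inter_add_card_sdiff, (Finset.mem_powersetCard.1 hs).2]
    · intro q hq
      rw [Finset.mem_filter, Finset.mem_product] at hq
      rw [Finset.mem_powersetCard]
      refine ⟨Finset.subset_univ _, ?_⟩
      rw [Finset.card_union_of_disjoint, hq.2]
      exact Finset.disjoint_left.2 fun j hj1 hj2 =>
        (Finset.mem_compl.1 (Finset.mem_powerset.1 hq.1.2 hj2)) (Finset.mem_powerset.1 hq.1.1 hj1)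
    · intro s _
      show s ∩ T ∪ s \ T = s
      rw [Finset.union_comm, Finset.sdiff_union_inter]
    · intro q hq
      rw [Finset.mem_filter, Finset.mem_product] at hq
      have h1 : q.1 ⊆ T := Finset.mem_powerset.1 hq.1.1
      have h2 : ∀ j ∈ q.2, j ∉ T := fun j hj => Finset.mem_compl.1 (Finset.mem_powerset.1 hq.1.2 hj)
      have e1 : (q.1 ∪ q.2) ∩ T = q.1 := by
        ext j
        simp only [Finset.mem_inter, Finset.mem_union]
        constructor
        · rintro ⟨hj1 | hj2, hjT⟩
          · exact hj1
          · exact absurd hjT (h2 j hj2)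
        · intro hj; exact ⟨Or.inl hj, h1 hj⟩
      have e2 : (q.1 ∪ q.2) \ T = q.2 := by
        ext j
        simp only [Finset.mem_sdiff, Finset.mem_union]
        constructor
        · rintro ⟨hj1 | hj2, hjT⟩
          · exact absurd (h1 hj1) hjT
          · exact hj2
        · intro hj; exact ⟨Or.inr hj, h2 j hj⟩
      rw [Prod.ext_iff]
      exact ⟨e1, e2⟩
    · intro s _; rfl
  rw [stepA, Finset.sum_filter, Finset.sum_product]
  have stepC : ∀ A : Finset (Fin ℓ), A ∈ T.powerset →
      ∑ B ∈ Tᶜ.powerset, (if A.card + B.card = i then ((-1:ℝ)) ^ A.card else 0)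
        = if A.card ≤ i then ((-1:ℝ)) ^ A.card * ((ℓ - w).choose (i - A.card) : ℝ) else 0 := by
    intro A _
    rw [← Finset.sum_filter]
    by_cases h : A.card ≤ i
    · have : (Tᶜ.powerset).filter (fun B => A.card + B.card = i)
          = Finset.powersetCard (i - A.card) Tᶜ := by
        ext B
        rw [Finset.mem_filter, Finset.mem_powerset, Finset.mem_powersetCard]
        constructor
        · rintro ⟨h1, h2⟩; exact ⟨h1, by omega⟩
        · rintro ⟨h1, h2⟩; exact ⟨h1, by omega⟩
      rw [this, Finset.sum_const, Finset.card_powersetCard, if_pos h]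
      have hc : Tᶜ.card = ℓ - w := by
        rw [Finset.card_compl, hw, Fintype.card_fin]
      rw [hc, nsmul_eq_mul, mul_comm]
    · have : (Tᶜ.powerset).filter (fun B => A.card + B.card = i) = ∅ := by
        rw [Finset.filter_eq_empty_iff]
        intro B _
        omega
      rw [this, Finset.sum_empty, if_neg h]
  rw [Finset.sum_congr rfl stepC]
  rw [Finset.sum_powerset]
  have stepD : ∀ m ∈ Finset.range (w + 1),
      ∑ A ∈ Finset.powersetCard m T,
          (if A.card ≤ i then ((-1:ℝ)) ^ A.card * ((ℓ - w).choose (i - A.card) : ℝ) else 0)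
        = (w.choose m : ℝ) * (if m ≤ i then ((-1:ℝ)) ^ m * ((ℓ - w).choose (i - m) : ℝ) else 0) := by
    intro m _
    rw [Finset.sum_congr rfl (fun A hA => by
      rw [(Finset.mem_powersetCard.1 hA).2]), Finset.sum_const, Finset.card_powersetCard,
      nsmul_eq_mul, hw]
  rw [Finset.sum_congr rfl stepD]
  have hkraw : (kraw ℓ i w : ℝ)
      = ∑ m ∈ Finset.range (i + 1), ((-1:ℝ)) ^ m * (w.choose m : ℝ) * ((ℓ - w).choose (i - m) : ℝ) := by
    rw [kraw]
    push_cast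
    rfl
  set G : ℕ → ℝ := fun m =>
    (w.choose m : ℝ) * (if m ≤ i then ((-1:ℝ)) ^ m * ((ℓ - w).choose (i - m) : ℝ) else 0) with hG
  have hL : ∑ m ∈ Finset.range (w + 1), G m = ∑ m ∈ Finset.range (w + i + 1), G m := by
    refine Finset.sum_subset (Finset.range_subset_range.2 (by omega)) ?_
    intro m _ hm
    rw [Finset.mem_range, not_lt] at hm
    rw [hG]
    simp only
    rw [Nat.choose_eq_zero_of_lt (by omega)]
    simp
  have hR : (kraw ℓ i w : ℝ) = ∑ m ∈ Finset.range (w + i + 1), G m := by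
    rw [hkraw]
    have : ∀ m ∈ Finset.range (i + 1),
        ((-1:ℝ)) ^ m * (w.choose m : ℝ) * ((ℓ - w).choose (i - m) : ℝ) = G m := by
      intro m hm
      rw [Finset.mem_range] at hm
      rw [hG]
      simp only
      rw [if_pos (by omega)]
      ring
    rw [Finset.sum_congr rfl this]
    refine Finset.sum_subset (Finset.range_subset_range.2 (by omega)) ?_
    intro m _ hm
    rw [Finset.mem_range, not_lt] at hm
    rw [if_neg (by omega), mul_zero]
  rw [hL, hR]

lemma kraw_eval (ℓ i : ℕ) (u : Fin ℓ → ZMod 2) :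
    ∑ z ∈ Finset.univ.filter (fun z : Fin ℓ → ZMod 2 => hammingNorm z = i),
        χ (∑ j, z j * u j)
      = (kraw ℓ i (hammingNorm u) : ℝ) := by
  have hT : hammingNorm u = (Finset.univ.filter (fun j => u j ≠ 0)).card := rfl
  calc ∑ z ∈ Finset.univ.filter (fun z : Fin ℓ → ZMod 2 => hammingNorm z = i),
        χ (∑ j, z j * u j)
      = ∑ z ∈ Finset.univ.filter (fun z : Fin ℓ → ZMod 2 => hammingNorm z = i),
        ((-1:ℝ)) ^ ((Finset.univ.filter (fun j => z j ≠ 0)) ∩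
          (Finset.univ.filter (fun j => u j ≠ 0))).card :=
        Finset.sum_congr rfl fun z _ => chi_dot ℓ z u
    _ = ∑ s ∈ Finset.powersetCard i (Finset.univ : Finset (Fin ℓ)),
        ((-1:ℝ)) ^ (s ∩ (Finset.univ.filter (fun j => u j ≠ 0))).card :=
        sum_wt_support ℓ i (fun s => ((-1:ℝ)) ^ (s ∩ (Finset.univ.filter (fun j => u j ≠ 0))).card)
    _ = _ := by rw [sum_powersetCard_inter, hT]

end Aux

lemma zmod2_cases' (a : ZMod 2) : a = 0 ∨ a = 1 := by revert a; decide

def Apairs (ℓ k : ℕ) : Finset ((Fin ℓ → ZMod 2) × (Fin ℓ → ZMod 2)) :=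
  Finset.univ.filter fun p => ∀ j : Fin ℓ, (j:ℕ) < k → p.1 j = p.2 j

lemma cardIdx' (ℓ k : ℕ) :
    (Finset.univ.filter fun j : Fin ℓ => ¬ ((j:ℕ) < k)).card = ℓ - k := by
  rw [← Nat.card_Ico k ℓ]
  refine Finset.card_nbij (i := fun j => (j : ℕ)) ?_ ?_ ?_
  · intro j hj
    simp only [Finset.mem_filter, Finset.mem_univ, true_and, not_lt] at hj
    show (j : ℕ) ∈ Finset.Ico k ℓ
    exact Finset.mem_Ico.2 ⟨by simpa using hj, j.2⟩
  · intro a ha b hb hab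
    exact Fin.val_injective hab
  · intro n hn
    rw [Finset.mem_coe, Finset.mem_Ico] at hn
    exact ⟨⟨n, hn.2⟩, by simp [Finset.mem_filter]; omega, rfl⟩

lemma cardFix' (ℓ k : ℕ) (x : Fin ℓ → ZMod 2) :
    (Finset.univ.filter fun y : Fin ℓ → ZMod 2 =>
        ∀ j : Fin ℓ, (j:ℕ) < k → y j = x j).card = 2 ^ (ℓ - k) := by
  rw [← Fintype.card_subtype]
  have e : {y : Fin ℓ → ZMod 2 // ∀ j : Fin ℓ, (j:ℕ) < k → y j = x j}
      ≃ ({j : Fin ℓ // ¬ ((j:ℕ) < k)} → ZMod 2) :=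
    { toFun := fun y j => y.1 j.1
      invFun := fun f => ⟨fun j => if h : (j:ℕ) < k then x j else f ⟨j, h⟩,
        fun j hj => by simp [hj]⟩
      left_inv := by
        rintro ⟨y, hy⟩
        ext j
        by_cases h : (j:ℕ) < k
        · simp only [dif_pos h]
          exact (hy j h).symm
        · simp only [dif_neg h]
      right_inv := by
        intro f
        funext j
        simp only [dif_neg j.2] }
  rw [Fintype.card_congr e, Fintype.card_fun]
  congr 1
  rw [Fintype.card_subtype, cardIdx' ℓ k]

lemma card_Apairs (ℓ k : ℕ) : (Apairs ℓ k).card = 2 ^ ℓ * 2 ^ (ℓ - k) := by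
  rw [Finset.card_eq_sum_card_fiberwise
    (f := Prod.fst) (t := Finset.univ) (fun p _ => Finset.mem_univ _)]
  have hfib : ∀ x : Fin ℓ → ZMod 2,
      ((Apairs ℓ k).filter fun p => p.1 = x).card = 2 ^ (ℓ - k) := by
    intro x
    rw [← cardFix' ℓ k x]
    refine Finset.card_nbij (i := Prod.snd) ?_ ?_ ?_
    · intro p hp
      simp only [Apairs, Finset.mem_coe, Finset.mem_filter, Finset.mem_univ, true_and] at hp
      obtain ⟨hagr, hx⟩ := hp
      show p.2 ∈ _
      simp only [Finset.mem_coe, Finset.mem_filter, Finset.mem_univ, true_and]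
      intro j hj
      rw [← hagr j hj, hx]
    · intro p hp q hq hpq
      simp only [Finset.mem_coe, Finset.mem_filter] at hp hq
      exact Prod.ext (hp.2.trans hq.2.symm) hpq
    · intro y hy
      rw [Finset.mem_coe, Finset.mem_filter] at hy
      refine ⟨(x, y), ?_, rfl⟩
      simp only [Apairs, Finset.mem_coe, Finset.mem_filter, Finset.mem_univ, true_and]
      exact ⟨fun j hj => (hy.2 j hj).symm, trivial⟩
  rw [Finset.sum_congr rfl (fun x _ => hfib x), Finset.sum_const, Finset.card_univ,
    Fintype.card_fun, Fintype.card_fin, ZMod.card, smul_eq_mul]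

section PD
variable {ℓ : ℕ} (g : (Fin ℓ → ZMod 2) → (Fin ℓ → ZMod 2))

lemma pd_le (i : ℕ) {x y : Fin ℓ → ZMod 2}
    (h1 : ∀ j : Fin ℓ, (j:ℕ) < i → x j = y j)
    (h2 : ∀ j : Fin ℓ, (j:ℕ) = i → x j = 0 ∧ y j = 1) :
    partialDist g i ≤ hammingDist (g x) (g y) :=
  Nat.sInf_le ⟨x, y, h1, h2, rfl⟩

lemma pd_chain (hmono : ∀ i, i + 1 < ℓ → partialDist g i ≤ partialDist g (i + 1))
    (k : ℕ) : ∀ i, k ≤ i → i < ℓ → partialDist g k ≤ partialDist g i := by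
  intro i
  induction i with
  | zero => intro h _; interval_cases k; exact le_refl _
  | succ n ih =>
    intro hki hi
    rcases Nat.lt_or_ge k (n+1) with h|h
    · exact le_trans (ih (by omega) (by omega)) (hmono n hi)
    · have : k = n + 1 := by omega
      rw [this]

lemma dist_ge (hmono : ∀ i, i + 1 < ℓ → partialDist g i ≤ partialDist g (i + 1))
    (k : ℕ) {x y : Fin ℓ → ZMod 2} (hxy : x ≠ y)
    (hagree : ∀ j : Fin ℓ, (j:ℕ) < k → x j = y j) :
    partialDist g k ≤ hammingDist (g x) (g y) := by
  have hs : (Finset.univ.filter fun j : Fin ℓ => x j ≠ y j).Nonempty := by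
    by_contra h
    rw [Finset.not_nonempty_iff_eq_empty, Finset.filter_eq_empty_iff] at h
    exact hxy (funext fun j => not_not.1 (h (Finset.mem_univ j)))
  set i0 := (Finset.univ.filter fun j : Fin ℓ => x j ≠ y j).min' hs with hi0
  have hmem : x i0 ≠ y i0 := by
    have := Finset.min'_mem _ hs
    rw [Finset.mem_filter] at this
    exact this.2
  have hbelow : ∀ j : Fin ℓ, j < i0 → x j = y j := by
    intro j hj
    by_contra h
    exact absurd hj (not_lt.2 (Finset.min'_le _ j (Finset.mem_filter.2 ⟨Finset.mem_univ _, h⟩)))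
  have hbelow' : ∀ j : Fin ℓ, (j:ℕ) < (i0:ℕ) → x j = y j := fun j hj => hbelow j hj
  have hk0 : k ≤ (i0:ℕ) := by
    by_contra h
    exact hmem (hagree i0 (by omega))
  have hchain : partialDist g k ≤ partialDist g (i0:ℕ) := pd_chain g hmono k (i0:ℕ) hk0 i0.2
  refine le_trans hchain ?_
  rcases zmod2_cases' (x i0) with hx0|hx0
  · have hy1 : y i0 = 1 := by
      rcases zmod2_cases' (y i0) with h|h
      · exact absurd (hx0.trans h.symm) hmem
      · exact h
    refine pd_le g (i0:ℕ) hbelow' ?_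
    intro j hj
    have : j = i0 := Fin.ext hj
    rw [this]
    exact ⟨hx0, hy1⟩
  · have hy0 : y i0 = 0 := by
      rcases zmod2_cases' (y i0) with h|h
      · exact h
      · exact absurd (hx0.trans h.symm) hmem
    rw [hammingDist_comm]
    refine pd_le g (i0:ℕ) (fun j hj => (hbelow' j hj).symm) ?_
    intro j hj
    have : j = i0 := Fin.ext hj
    rw [this]
    exact ⟨hy0, hx0⟩

lemma pd_pos (hg : Function.Injective g) (k : ℕ) (hk : k < ℓ) :
    1 ≤ partialDist g k := by
  have hne : { d | ∃ x y : Fin ℓ → ZMod 2,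
      (∀ j : Fin ℓ, (j : ℕ) < k → x j = y j) ∧
      (∀ j : Fin ℓ, (j : ℕ) = k → x j = 0 ∧ y j = 1) ∧
      d = hammingDist (g x) (g y) }.Nonempty := by
    refine ⟨hammingDist (g 0) (g (fun j => if (j:ℕ) = k then 1 else 0)), 0,
      (fun j => if (j:ℕ) = k then 1 else 0), ?_, ?_, rfl⟩
    · intro j hj
      simp [show (j:ℕ) ≠ k by omega]
    · intro j hj
      simp [hj]
  have hmem := Nat.sInf_mem hne
  obtain ⟨x, y, h1, h2, h3⟩ := hmem
  have hxy : x ≠ y := by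
    intro h
    have := h2 ⟨k, hk⟩ rfl
    rw [h] at this
    exact one_ne_zero (this.2.symm.trans this.1)
  have hgoal : partialDist g k = hammingDist (g x) (g y) := h3
  rw [hgoal]
  have hne' : g x ≠ g y := fun h => hxy (hg h)
  exact Nat.one_le_iff_ne_zero.2 (fun h => hne' (hammingDist_eq_zero.1 h))
end PD


section Main
variable {ℓ : ℕ} (g : (Fin ℓ → ZMod 2) → (Fin ℓ → ZMod 2))

noncomputable def cnt (k j : ℕ) : ℕ :=
  ((Apairs ℓ k).filter fun p => hammingDist (g p.1) (g p.2) = j).card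

lemma cnt_zero (hg : Function.Injective g) (k : ℕ) : cnt g k 0 = 2 ^ ℓ := by
  have h1 : ((Apairs ℓ k).filter fun p => hammingDist (g p.1) (g p.2) = 0)
      = Finset.univ.filter (fun p : (Fin ℓ → ZMod 2) × (Fin ℓ → ZMod 2) => p.1 = p.2) := by
    ext p
    simp only [Apairs, Finset.mem_filter, Finset.mem_univ, true_and]
    constructor
    · rintro ⟨_, hd⟩
      exact hg (hammingDist_eq_zero.1 hd)
    · intro h
      exact ⟨fun j _ => by rw [h], by rw [h, hammingDist_self]⟩
  rw [cnt, h1]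
  have h2 : (Finset.univ.filter
      (fun p : (Fin ℓ → ZMod 2) × (Fin ℓ → ZMod 2) => p.1 = p.2))
      = (Finset.univ : Finset (Fin ℓ → ZMod 2)).diag := by
    ext p
    simp [Finset.mem_diag]
  rw [h2, Finset.diag_card, Finset.card_univ, Fintype.card_fun, Fintype.card_fin, ZMod.card]

lemma cnt_low (hmono : ∀ i, i + 1 < ℓ → partialDist g i ≤ partialDist g (i + 1))
    (k j : ℕ) (hj1 : 1 ≤ j) (hj2 : j < partialDist g k) : cnt g k j = 0 := by
  rw [cnt, Finset.card_eq_zero, Finset.filter_eq_empty_iff]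
  intro p hp
  simp only [Apairs, Finset.mem_filter, Finset.mem_univ, true_and] at hp
  intro hd
  by_cases hpq : p.1 = p.2
  · rw [hpq, hammingDist_self] at hd
    omega
  · have := dist_ge g hmono k hpq hp
    omega

lemma cnt_total (k : ℕ) : ∑ j ∈ Finset.range (ℓ + 1), cnt g k j = (Apairs ℓ k).card := by
  rw [Finset.card_eq_sum_card_fiberwise
    (f := fun p => hammingDist (g p.1) (g p.2)) (t := Finset.range (ℓ + 1))
    (fun p _ => Finset.mem_range.2 (by
      show hammingDist (g p.1) (g p.2) < ℓ + 1
      have := hammingDist_le_card_fintype (x := g p.1) (y := g p.2)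
      rw [Fintype.card_fin] at this
      omega))]
  rfl

lemma range_eq_insert_Icc (ℓ : ℕ) :
    Finset.range (ℓ + 1) = insert 0 (Finset.Icc 1 ℓ) := by
  ext n
  simp only [Finset.mem_range, Finset.mem_insert, Finset.mem_Icc]
  omega

lemma sum_cnt (hg : Function.Injective g)
    (hmono : ∀ i, i + 1 < ℓ → partialDist g i ≤ partialDist g (i + 1))
    (k : ℕ) (hk : k < ℓ) :
    ∑ j ∈ Finset.Icc (partialDist g k) ℓ, cnt g k j = 2 ^ ℓ * 2 ^ (ℓ - k) - 2 ^ ℓ := by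
  have hD : 1 ≤ partialDist g k := pd_pos g hg k hk
  have h1 : ∑ j ∈ Finset.Icc (partialDist g k) ℓ, cnt g k j
      = ∑ j ∈ Finset.Icc 1 ℓ, cnt g k j := by
    refine Finset.sum_subset ?_ ?_
    · intro j hj
      rw [Finset.mem_Icc] at hj ⊢
      omega
    · intro j hj hj2
      rw [Finset.mem_Icc] at hj
      rw [Finset.mem_Icc, not_and_or] at hj2
      exact cnt_low g hmono k j hj.1 (by omega)
  have h2 : ∑ j ∈ Finset.range (ℓ + 1), cnt g k j
      = cnt g k 0 + ∑ j ∈ Finset.Icc 1 ℓ, cnt g k j := by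
    rw [range_eq_insert_Icc, Finset.sum_insert (by simp)]
  have h3 := cnt_total g k
  have h4 := card_Apairs ℓ k
  have h5 := cnt_zero g hg k
  omega

lemma Apairs_key (k : ℕ) :
    Apairs ℓ k = Finset.univ.filter
      (fun p : (Fin ℓ → ZMod 2) × (Fin ℓ → ZMod 2) =>
        (fun j : Fin ℓ => if (j:ℕ) < k then p.1 j else 0)
          = (fun j : Fin ℓ => if (j:ℕ) < k then p.2 j else 0)) := by
  apply Finset.filter_congr
  intro p _
  constructor
  · intro h
    funext j
    by_cases hj : (j:ℕ) < k <;> simp [hj]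
    exact h j hj
  · intro h j hj
    have := congrFun h j
    simpa [hj] using this

lemma delsarte (k i : ℕ) :
    0 ≤ ∑ p ∈ Apairs ℓ k, (kraw ℓ i (hammingDist (g p.1) (g p.2)) : ℝ) := by
  have hneg : ∀ b : ZMod 2, -b = b := by decide
  have step1 : ∀ p : (Fin ℓ → ZMod 2) × (Fin ℓ → ZMod 2),
      (kraw ℓ i (hammingDist (g p.1) (g p.2)) : ℝ)
      = ∑ z ∈ Finset.univ.filter (fun z : Fin ℓ → ZMod 2 => hammingNorm z = i),
          χ (∑ j, z j * g p.1 j) * χ (∑ j, z j * g p.2 j) := by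
    intro p
    rw [hammingDist_eq_hammingNorm, ← kraw_eval]
    refine Finset.sum_congr rfl fun z _ => ?_
    rw [← χ_add, ← Finset.sum_add_distrib]
    congr 1
    refine Finset.sum_congr rfl fun j _ => ?_
    show z j * (-g p.1 + g p.2) j = _
    rw [Pi.add_apply, Pi.neg_apply, hneg, mul_add]
  rw [Finset.sum_congr rfl fun p _ => step1 p, Finset.sum_comm]
  refine Finset.sum_nonneg fun z _ => ?_
  have := sum_pairs_sq (fun x : Fin ℓ → ZMod 2 => (fun j : Fin ℓ => if (j:ℕ) < k then x j else 0))
    (fun x => χ (∑ j, z j * g x j))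
  rw [Apairs_key (ℓ := ℓ) k, this]
  exact Finset.sum_nonneg fun w _ => sq_nonneg _

lemma sum_kraw_fiber (k i : ℕ) :
    ∑ p ∈ Apairs ℓ k, (kraw ℓ i (hammingDist (g p.1) (g p.2)) : ℝ)
      = ∑ j ∈ Finset.range (ℓ + 1), (cnt g k j : ℝ) * (kraw ℓ i j : ℝ) := by
  rw [← Finset.sum_fiberwise_of_maps_to
    (t := Finset.range (ℓ + 1))
    (fun p (_ : p ∈ Apairs ℓ k) => Finset.mem_range.2 (by
      show hammingDist (g p.1) (g p.2) < ℓ + 1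
      have := hammingDist_le_card_fintype (x := g p.1) (y := g p.2)
      rw [Fintype.card_fin] at this
      omega))
    (fun p => (kraw ℓ i (hammingDist (g p.1) (g p.2)) : ℝ))]
  refine Finset.sum_congr rfl fun j _ => ?_
  rw [Finset.sum_congr rfl (fun p hp => by
    rw [(Finset.mem_filter.1 hp).2]), Finset.sum_const, cnt, nsmul_eq_mul]

lemma sum_Icc_cnt_kraw (hg : Function.Injective g)
    (hmono : ∀ i, i + 1 < ℓ → partialDist g i ≤ partialDist g (i + 1))
    (k i : ℕ) (hk : k < ℓ) :
    ∑ jj ∈ Finset.Icc (partialDist g k) ℓ, (cnt g k jj : ℝ) * (kraw ℓ i jj : ℝ)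
      = (∑ p ∈ Apairs ℓ k, (kraw ℓ i (hammingDist (g p.1) (g p.2)) : ℝ))
        - 2 ^ ℓ * (ℓ.choose i : ℝ) := by
  have hD : 1 ≤ partialDist g k := pd_pos g hg k hk
  have h1 : ∑ jj ∈ Finset.Icc (partialDist g k) ℓ, (cnt g k jj : ℝ) * (kraw ℓ i jj : ℝ)
      = ∑ jj ∈ Finset.Icc 1 ℓ, (cnt g k jj : ℝ) * (kraw ℓ i jj : ℝ) := by
    refine Finset.sum_subset ?_ ?_
    · intro j hj
      rw [Finset.mem_Icc] at hj ⊢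
      omega
    · intro j hj hj2
      rw [Finset.mem_Icc] at hj
      rw [Finset.mem_Icc, not_and_or] at hj2
      rw [cnt_low g hmono k j hj.1 (by omega)]
      simp
  have h2 : ∑ jj ∈ Finset.range (ℓ + 1), (cnt g k jj : ℝ) * (kraw ℓ i jj : ℝ)
      = (cnt g k 0 : ℝ) * (kraw ℓ i 0 : ℝ)
        + ∑ jj ∈ Finset.Icc 1 ℓ, (cnt g k jj : ℝ) * (kraw ℓ i jj : ℝ) := by
    rw [range_eq_insert_Icc, Finset.sum_insert (by simp)]
  rw [h1, sum_kraw_fiber g k i, h2, cnt_zero g hg k, kraw_zero]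
  push_cast
  ring

end Main

theorem partialDist_LPvalid {ℓ : ℕ}
    (g : (Fin ℓ → ZMod 2) → (Fin ℓ → ZMod 2)) (hg : Function.Bijective g)
    (hmono : ∀ i, i + 1 < ℓ → partialDist g i ≤ partialDist g (i + 1)) :
    (∀ i < ℓ, partialDist g i ≤ maxMinDist ℓ (ℓ - i)) ∧
    ∃ B : ℕ → ℕ → ℝ,
      (∀ k i, 0 ≤ B k i) ∧
      (∀ r, 1 ≤ r → r ≤ ℓ →
        ∑ i ∈ Finset.Icc (partialDist g (ℓ - r)) ℓ, B (ℓ - r) i = 2 ^ r - 1) ∧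
      (∀ r, 1 ≤ r → r ≤ ℓ - 1 → ∀ i, partialDist g (ℓ - r + 1) ≤ i → i ≤ ℓ →
        B (ℓ - r + 1) i ≤ B (ℓ - r) i) ∧
      (∀ i ≤ ℓ, ∀ r, 1 ≤ r → r ≤ ℓ →
        -(Nat.choose ℓ i : ℝ) ≤
          ∑ jj ∈ Finset.Icc (partialDist g (ℓ - r)) ℓ, B (ℓ - r) jj * (kraw ℓ i jj : ℝ)) := by
  have hginj : Function.Injective g := hg.1
  constructor
  · -- part (a)
    intro i hi
    set C : Finset (Fin ℓ → ZMod 2) :=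
      (Finset.univ.filter fun x : Fin ℓ → ZMod 2 =>
        ∀ j : Fin ℓ, (j:ℕ) < i → x j = (0 : Fin ℓ → ZMod 2) j).image g with hC
    have hCcard : C.card = 2 ^ (ℓ - i) := by
      rw [hC, Finset.card_image_of_injective _ hginj, cardFix']
    have hCmin : ∀ c0 ∈ C, ∀ c1 ∈ C, c0 ≠ c1 → partialDist g i ≤ hammingDist c0 c1 := by
      intro c0 hc0 c1 hc1 hne
      obtain ⟨x, hx, rfl⟩ := Finset.mem_image.1 hc0
      obtain ⟨y, hy, rfl⟩ := Finset.mem_image.1 hc1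
      rw [Finset.mem_filter] at hx hy
      have hxy : x ≠ y := fun h => hne (by rw [h])
      exact dist_ge g hmono i hxy (fun j hj => (hx.2 j hj).trans (hy.2 j hj).symm)
    have hmem : partialDist g i ∈ { d | ∃ C : Finset (Fin ℓ → ZMod 2), C.card = 2 ^ (ℓ - i) ∧
        ∀ c0 ∈ C, ∀ c1 ∈ C, c0 ≠ c1 → d ≤ hammingDist c0 c1 } := ⟨C, hCcard, hCmin⟩
    have hbdd : BddAbove { d | ∃ C : Finset (Fin ℓ → ZMod 2), C.card = 2 ^ (ℓ - i) ∧
        ∀ c0 ∈ C, ∀ c1 ∈ C, c0 ≠ c1 → d ≤ hammingDist c0 c1 } := by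
      refine ⟨ℓ, ?_⟩
      rintro d ⟨C', hC'card, hC'min⟩
      have h2 : 1 < C'.card := by
        rw [hC'card]
        have : 1 ≤ ℓ - i := by omega
        calc 1 < 2 ^ 1 := by norm_num
          _ ≤ 2 ^ (ℓ - i) := Nat.pow_le_pow_right (by norm_num) this
      obtain ⟨a, ha, b, hb, hab⟩ := Finset.one_lt_card.1 h2
      have := hC'min a ha b hb hab
      have hle : hammingDist a b ≤ ℓ := by
        have := hammingDist_le_card_fintype (x := a) (y := b)
        rwa [Fintype.card_fin] at this
      omega
    exact le_csSup hbdd hmem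
  · -- part (b)
    refine ⟨fun k j => (cnt g k j : ℝ) / 2 ^ ℓ, ?_, ?_, ?_, ?_⟩
    · intro k j
      positivity
    · intro r hr1 hr2
      have hk : ℓ - r < ℓ := by omega
      rw [← Finset.sum_div, ← Nat.cast_sum, sum_cnt g hginj hmono (ℓ - r) hk]
      have hle : 2 ^ ℓ ≤ 2 ^ ℓ * 2 ^ (ℓ - (ℓ - r)) := Nat.le_mul_of_pos_right _ (Nat.two_pow_pos _)
      have hrr : ℓ - (ℓ - r) = r := by omega
      rw [hrr] at hle ⊢
      rw [Nat.cast_sub hle]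
      push_cast
      have h2 : (2:ℝ) ^ ℓ ≠ 0 := by positivity
      field_simp
    · intro r hr1 hr2 j _ _
      have hsub : ((Apairs ℓ (ℓ - r + 1)).filter
            fun p => hammingDist (g p.1) (g p.2) = j)
          ⊆ ((Apairs ℓ (ℓ - r)).filter fun p => hammingDist (g p.1) (g p.2) = j) := by
        intro p hp
        simp only [Apairs, Finset.mem_filter, Finset.mem_univ, true_and] at hp ⊢
        exact ⟨fun jj hjj => hp.1 jj (by omega), hp.2⟩
      have hcard : cnt g (ℓ - r + 1) j ≤ cnt g (ℓ - r) j := Finset.card_le_card hsub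
      have h2 : (0:ℝ) < 2 ^ ℓ := by positivity
      show (cnt g (ℓ - r + 1) j : ℝ) / 2 ^ ℓ ≤ (cnt g (ℓ - r) j : ℝ) / 2 ^ ℓ
      exact (div_le_div_iff_of_pos_right h2).2 (by exact_mod_cast hcard)
    · intro i hi r hr1 hr2
      have hk : ℓ - r < ℓ := by omega
      have hsum : ∑ jj ∈ Finset.Icc (partialDist g (ℓ - r)) ℓ,
          (cnt g (ℓ - r) jj : ℝ) / 2 ^ ℓ * (kraw ℓ i jj : ℝ)
          = (∑ jj ∈ Finset.Icc (partialDist g (ℓ - r)) ℓ,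
              (cnt g (ℓ - r) jj : ℝ) * (kraw ℓ i jj : ℝ)) / 2 ^ ℓ := by
        rw [Finset.sum_div]
        refine Finset.sum_congr rfl fun jj _ => ?_
        ring
      rw [hsum, sum_Icc_cnt_kraw g hginj hmono (ℓ - r) i hk]
      have hT := delsarte g (ℓ - r) i
      set T := ∑ p ∈ Apairs ℓ (ℓ - r), (kraw ℓ i (hammingDist (g p.1) (g p.2)) : ℝ) with hTdef
      have h2 : (0:ℝ) < 2 ^ ℓ := by positivity
      rw [le_div_iff₀ h2]
      nlinarith [hT]
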